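/- Let G be an even cycle of length 2ℓ whose edges are each colored red or blue, let M₀ be the perfect matching of even-indexed edges and M₁ the perfect matching of odd-indexed edges, and let r₀ = |M₀ ∩ R|, r₁ = |M₁ ∩ R| be the numbers of red edges in each. Then for every integer k with min(r₀, r₁) ≤ k ≤ max(r₀, r₁), there exists a matching M of G with |M| ≥ ℓ − 1 and exactly k red edges. -/

import Mathlib

open Finset

namespace Stmt3Aux

/-- The interpolating edge set: odd edges below `j`, even edges at or above `j`. -/
def Aj (l j : ℕ) : Finset ℕ :=
  (Finset.range (2*l)).filter (fun i => (i % 2 = 1 ∧ i < j) ∨ (i % 2 = 0 ∧ j ≤ i))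

/-- The red edges of `Aj`. -/
def Fj (l : ℕ) (c : ℕ → Bool) (j : ℕ) : Finset ℕ :=
  (Aj l j).filter (fun i => c i = true)

lemma mem_Aj {l j i : ℕ} :
    i ∈ Aj l j ↔ i < 2*l ∧ ((i % 2 = 1 ∧ i < j) ∨ (i % 2 = 0 ∧ j ≤ i)) := by
  simp [Aj, mem_filter, mem_range]

lemma mem_Fj {l : ℕ} {c : ℕ → Bool} {j i : ℕ} :
    i ∈ Fj l c j ↔ (i < 2*l ∧ ((i % 2 = 1 ∧ i < j) ∨ (i % 2 = 0 ∧ j ≤ i))) ∧ c i = true := by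
  simp [Fj, mem_filter, mem_Aj]

lemma step_even {l j : ℕ} {c : ℕ → Bool} (hpar : j % 2 = 0) :
    Fj l c (j+1) = (Fj l c j).erase j := by
  ext i
  rw [mem_erase, mem_Fj, mem_Fj]
  constructor
  · rintro ⟨⟨hi, hp⟩, hc⟩
    exact ⟨by omega, ⟨hi, by omega⟩, hc⟩
  · rintro ⟨hne, ⟨hi, hp⟩, hc⟩
    exact ⟨⟨hi, by omega⟩, hc⟩

lemma step_odd {l j : ℕ} {c : ℕ → Bool} (hpar : j % 2 = 1) :
    Fj l c j = (Fj l c (j+1)).erase j := by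
  ext i
  rw [mem_erase, mem_Fj, mem_Fj]
  constructor
  · rintro ⟨⟨hi, hp⟩, hc⟩
    exact ⟨by omega, ⟨hi, by omega⟩, hc⟩
  · rintro ⟨hne, ⟨hi, hp⟩, hc⟩
    exact ⟨⟨hi, by omega⟩, hc⟩

lemma card_step (l : ℕ) (c : ℕ → Bool) (j : ℕ) (hj : j < 2*l) :
    (Fj l c j).card + (if j % 2 = 1 ∧ c j = true then 1 else 0)
      = (Fj l c (j+1)).card + (if j % 2 = 0 ∧ c j = true then 1 else 0) := by
  rcases Nat.mod_two_eq_zero_or_one j with hpar | hpar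
  · rw [step_even hpar, if_neg (fun (hh : j % 2 = 1 ∧ c j = true) => by omega)]
    by_cases hc : c j = true
    · have hm : j ∈ Fj l c j := mem_Fj.mpr ⟨⟨hj, Or.inr ⟨hpar, le_refl j⟩⟩, hc⟩
      rw [card_erase_of_mem hm, if_pos ⟨hpar, hc⟩]
      have : 1 ≤ (Fj l c j).card := card_pos.mpr ⟨j, hm⟩
      omega
    · have hm : j ∉ Fj l c j := fun h => hc (mem_Fj.mp h).2
      rw [erase_eq_of_notMem hm, if_neg (fun h => hc h.2)]
  · rw [step_odd hpar, if_neg (fun (hh : j % 2 = 0 ∧ c j = true) => by omega)]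
    by_cases hc : c j = true
    · have hm : j ∈ Fj l c (j+1) := mem_Fj.mpr ⟨⟨hj, Or.inl ⟨hpar, by omega⟩⟩, hc⟩
      rw [card_erase_of_mem hm, if_pos ⟨hpar, hc⟩]
      have : 1 ≤ (Fj l c (j+1)).card := card_pos.mpr ⟨j, hm⟩
      omega
    · have hm : j ∉ Fj l c (j+1) := fun h => hc (mem_Fj.mp h).2
      rw [erase_eq_of_notMem hm, if_neg (fun h => hc h.2)]

lemma evens_card (l : ℕ) :
    ((Finset.range (2*l)).filter (fun i => i % 2 = 0)).card = l := by
  induction l with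
  | zero => simp
  | succ n ih =>
    have h2 : 2*(n+1) = (2*n) + 1 + 1 := by ring
    rw [h2, range_add_one, range_add_one, filter_insert, filter_insert,
        if_neg (by omega), if_pos (by omega),
        card_insert_of_notMem (by simp), ih]

lemma Aj_zero (l : ℕ) : Aj l 0 = (Finset.range (2*l)).filter (fun i => i % 2 = 0) := by
  apply filter_congr
  intro i _
  constructor
  · rintro (⟨h1, h2⟩ | ⟨h1, h2⟩) <;> omega
  · intro h; exact Or.inr ⟨h, Nat.zero_le _⟩

lemma Aj_eq_Fj_true (l j : ℕ) : Aj l j = Fj l (fun _ => true) j := by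
  simp [Fj]

lemma card_Aj (l : ℕ) : ∀ j ≤ 2*l, (Aj l j).card + (j+1)/2 = l + j/2 := by
  intro j
  induction j with
  | zero => intro _; rw [Aj_zero, evens_card]
  | succ j ih =>
    intro hj
    have hj' : j < 2*l := by omega
    have h := card_step l (fun _ => true) j hj'
    rw [← Aj_eq_Fj_true, ← Aj_eq_Fj_true] at h
    have ihe := ih (by omega)
    rcases Nat.mod_two_eq_zero_or_one j with hpar | hpar
    · rw [if_neg (fun (hh : j % 2 = 1 ∧ (fun _ => true) j = true) => by omega),
          if_pos (⟨hpar, rfl⟩ : j % 2 = 0 ∧ (fun _ => true) j = true)] at h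
      omega
    · rw [if_pos (⟨hpar, rfl⟩ : j % 2 = 1 ∧ (fun _ => true) j = true),
          if_neg (fun (hh : j % 2 = 0 ∧ (fun _ => true) j = true) => by omega)] at h
      omega

lemma match_Aj (l : ℕ) (hl : 1 ≤ l) (j : ℕ) (hgood : j = 0 ∨ j % 2 = 1 ∨ j = 2*l) :
    ∀ i ∈ Aj l j, (i+1) % (2*l) ∉ Aj l j := by
  intro i hi hmem
  rw [mem_Aj] at hi
  rcases Nat.lt_or_ge (i+1) (2*l) with h | h
  · rw [Nat.mod_eq_of_lt h, mem_Aj] at hmem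
    omega
  · have he : i + 1 = 2*l := by omega
    rw [he, Nat.mod_self, mem_Aj] at hmem
    omega

/-- Discrete intermediate value theorem, increasing version. -/
lemma dIVT_mono (g : ℕ → ℕ) (n : ℕ)
    (hstep : ∀ t, t < n → g t ≤ g (t+1) + 1 ∧ g (t+1) ≤ g t + 1)
    (k : ℕ) (h1 : g 0 ≤ k) (h2 : k ≤ g n) : ∃ t ≤ n, g t = k := by
  induction n with
  | zero => exact ⟨0, le_refl 0, le_antisymm h1 h2⟩
  | succ n ih =>
    by_cases hk : k ≤ g n
    · obtain ⟨t, ht, hgt⟩ := ih (fun t ht => hstep t (by omega)) hk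
      exact ⟨t, by omega, hgt⟩
    · have h := hstep n (by omega)
      exact ⟨n+1, le_refl _, by omega⟩

/-- Discrete intermediate value theorem. -/
lemma dIVT (g : ℕ → ℕ) (n k : ℕ)
    (hstep : ∀ t, t < n → g t ≤ g (t+1) + 1 ∧ g (t+1) ≤ g t + 1)
    (h1 : min (g 0) (g n) ≤ k) (h2 : k ≤ max (g 0) (g n)) : ∃ t ≤ n, g t = k := by
  rcases le_total (g 0) (g n) with hle | hle
  · exact dIVT_mono g n hstep k (by omega) (by omega)
  · obtain ⟨t, ht, hgt⟩ := dIVT_mono (fun t => g (n - t)) n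
      (by
        intro t ht
        have h := hstep (n - t - 1) (by omega)
        have he : n - t - 1 + 1 = n - t := by omega
        rw [he] at h
        have he2 : n - (t + 1) = n - t - 1 := by omega
        simp only [he2]
        exact ⟨h.2, h.1⟩) k
      (by simp only [Nat.sub_zero]; omega) (by simp only [Nat.sub_self]; omega)
    exact ⟨n - t, by omega, hgt⟩

def jfun (l t : ℕ) : ℕ := if t = 0 then 0 else min (2*t - 1) (2*l)

lemma exists_good (l : ℕ) (hl : 1 ≤ l) (c : ℕ → Bool) (k : ℕ)
    (h1 : min ((Fj l c 0).card) ((Fj l c (2*l)).card) ≤ k)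
    (h2 : k ≤ max ((Fj l c 0).card) ((Fj l c (2*l)).card)) :
    ∃ j, (j = 0 ∨ j % 2 = 1 ∨ j = 2*l) ∧ j ≤ 2*l ∧ (Fj l c j).card = k := by
  have hj0 : jfun l 0 = 0 := by simp [jfun]
  have hjn : jfun l (l+1) = 2*l := by
    unfold jfun
    rw [if_neg (by omega)]
    omega
  have key : ∀ t, t < l + 1 →
      (Fj l c (jfun l t)).card ≤ (Fj l c (jfun l (t+1))).card + 1 ∧
      (Fj l c (jfun l (t+1))).card ≤ (Fj l c (jfun l t)).card + 1 := by
    intro t ht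
    rcases Nat.eq_zero_or_pos t with rfl | htpos
    · have hj1 : jfun l (0 + 1) = 1 := by
        unfold jfun; rw [if_neg (by omega)]; omega
      rw [hj0, hj1]
      have h : (Fj l c 0).card + (if (0:ℕ) % 2 = 1 ∧ c 0 = true then 1 else 0)
          = (Fj l c 1).card + (if (0:ℕ) % 2 = 0 ∧ c 0 = true then 1 else 0) :=
        card_step l c 0 (by omega)
      have hm : (0 : ℕ) % 2 = 0 := by omega
      rw [if_neg (fun (hh : (0:ℕ) % 2 = 1 ∧ c 0 = true) => by omega)] at h
      by_cases hc : c 0 = true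
      · rw [if_pos ⟨hm, hc⟩] at h; omega
      · rw [if_neg (fun hh => hc hh.2)] at h; omega
    · rcases Nat.lt_or_ge t l with htl | htl
      · have h1' : jfun l t = 2*t - 1 := by
          unfold jfun; rw [if_neg (by omega)]; omega
        have h2' : jfun l (t+1) = 2*t + 1 := by
          unfold jfun; rw [if_neg (by omega)]; omega
        rw [h1', h2']
        have ha := card_step l c (2*t-1) (by omega)
        have hb := card_step l c (2*t) (by omega)
        have he : 2*t - 1 + 1 = 2*t := by omega
        rw [he] at ha
        have hm1 : (2*t - 1) % 2 = 1 := by omega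
        have hm0 : (2*t) % 2 = 0 := by omega
        rw [if_neg (fun (hh : (2*t-1) % 2 = 0 ∧ c (2*t-1) = true) => by omega)] at ha
        rw [if_neg (fun (hh : (2*t) % 2 = 1 ∧ c (2*t) = true) => by omega)] at hb
        by_cases hca : c (2*t-1) = true
        · rw [if_pos ⟨hm1, hca⟩] at ha
          by_cases hcb : c (2*t) = true
          · rw [if_pos ⟨hm0, hcb⟩] at hb; omega
          · rw [if_neg (fun hh => hcb hh.2)] at hb; omega
        · rw [if_neg (fun hh => hca hh.2)] at ha
          by_cases hcb : c (2*t) = true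
          · rw [if_pos ⟨hm0, hcb⟩] at hb; omega
          · rw [if_neg (fun hh => hcb hh.2)] at hb; omega
      · have hteq : t = l := by omega
        rw [hteq]
        have h1' : jfun l l = 2*l - 1 := by
          unfold jfun; rw [if_neg (by omega)]; omega
        rw [h1', hjn]
        have ha := card_step l c (2*l-1) (by omega)
        have he : 2*l - 1 + 1 = 2*l := by omega
        rw [he] at ha
        have hm1 : (2*l - 1) % 2 = 1 := by omega
        rw [if_neg (fun (hh : (2*l-1) % 2 = 0 ∧ c (2*l-1) = true) => by omega)] at ha
        by_cases hc : c (2*l-1) = true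
        · rw [if_pos ⟨hm1, hc⟩] at ha; omega
        · rw [if_neg (fun hh => hc hh.2)] at ha; omega
  obtain ⟨t, ht, hgt⟩ := dIVT (fun t => (Fj l c (jfun l t)).card) (l+1) k key
    (by simp only [hj0, hjn]; exact h1) (by simp only [hj0, hjn]; exact h2)
  refine ⟨jfun l t, ?_, ?_, hgt⟩
  · unfold jfun; split <;> omega
  · unfold jfun; split <;> omega

end Stmt3Aux

open Stmt3Aux in
/-- Edges of the even cycle of length `2*l` are indexed by `{0, …, 2*l-1}`;
edge `i` is adjacent to edge `(i+1) % (2*l)`. `c i = true` means edge `i` is red. -/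
theorem stmt3 (l : ℕ) (hl : 1 ≤ l) (c : ℕ → Bool) (r0 r1 k : ℕ)
    (hr0 : r0 = ((Finset.range (2 * l)).filter (fun i => i % 2 = 0 ∧ c i = true)).card)
    (hr1 : r1 = ((Finset.range (2 * l)).filter (fun i => i % 2 = 1 ∧ c i = true)).card)
    (hk1 : min r0 r1 ≤ k) (hk2 : k ≤ max r0 r1) :
    ∃ M : Finset ℕ, M ⊆ Finset.range (2 * l) ∧
      (∀ i ∈ M, (i + 1) % (2 * l) ∉ M) ∧
      l - 1 ≤ M.card ∧
      (M.filter (fun i => c i = true)).card = k := by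
  have e0 : (Fj l c 0).card = r0 := by
    rw [hr0]
    congr 1
    rw [Fj, Aj, filter_filter]
    apply filter_congr
    intro i _
    constructor
    · rintro ⟨hp, hc⟩
      exact ⟨by omega, hc⟩
    · rintro ⟨hp, hc⟩
      exact ⟨Or.inr ⟨hp, Nat.zero_le _⟩, hc⟩
  have e1 : (Fj l c (2*l)).card = r1 := by
    rw [hr1]
    congr 1
    rw [Fj, Aj, filter_filter]
    apply filter_congr
    intro i hi
    rw [mem_range] at hi
    constructor
    · rintro ⟨hp, hc⟩
      exact ⟨by omega, hc⟩
    · rintro ⟨hp, hc⟩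
      exact ⟨Or.inl ⟨hp, by omega⟩, hc⟩
  obtain ⟨j, hgood, hjle, hcard⟩ := exists_good l hl c k (by omega) (by omega)
  refine ⟨Aj l j, filter_subset _ _, match_Aj l hl j hgood, ?_, hcard⟩
  have := card_Aj l j hjle
  omega
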